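/- Let u be a positive solution of the radial problem (30) and let w be a solution of the linearized problem (31). Define \xi(r) = r^{n-1}\,[\,(p-1)\varphi_p(u'(r))\,w(r) - \varphi_p'(u'(r))\,u(r)\,w'(r)\,] and T(r) = r^n\,[\,(p-1)\varphi_p(u'(r))\,w'(r) + f(r,u(r))\,w(r)\,] + (n-p)\,r^{n-1}\varphi_p(u'(r))\,w(r). Then for all r \in (0,1): \xi'(r) = r^{n-1}\,w(r)\,[\,u(r) f_u(r,u(r)) - (p-1) f(r,u(r))\,] and T'(r) = r^{n-1}\,w(r)\,[\,p\, f(r,u(r)) + r\, f_r(r,u(r))\,]. -/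

import Mathlib

open Set

/-- `φ_p(t) = t |t|^{p-2}` (real exponent), with `φ_p(0)=0`. -/
noncomputable def phi (p t : ℝ) : ℝ := t * |t| ^ (p - 2)

/-- `φ_p'(t) = (p-1) |t|^{p-2}`. -/
noncomputable def phi' (p t : ℝ) : ℝ := (p - 1) * |t| ^ (p - 2)

/-- The derivative of a function on `[0,1]` (one-sided at the endpoints). -/
noncomputable def du (u : ℝ → ℝ) : ℝ → ℝ := derivWithin u (Set.Icc 0 1)

/-- A positive (classical) solution of the radial problem (30):
`(φ_p(u'))' + ((n-1)/r) φ_p(u') + f(r,u) = 0` on `(0,1)`, `u'(0) = u(1) = 0`,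
with `u ∈ C^1[0,1]`, `φ_p ∘ u' ∈ C^1((0,1])`, and `u > 0` on `[0,1)`. -/
structure RadialSol (p : ℝ) (n : ℕ) (f : ℝ → ℝ → ℝ) (u : ℝ → ℝ) : Prop where
  reg : ContDiffOn ℝ 1 u (Set.Icc 0 1)
  reg' : ContDiffOn ℝ 1 (fun r => phi p (du u r)) (Set.Ioc 0 1)
  pos : ∀ r ∈ Set.Ico (0:ℝ) 1, 0 < u r
  bc0 : du u 0 = 0
  bc1 : u 1 = 0
  ode : ∀ r ∈ Set.Ioo (0:ℝ) 1,
    deriv (fun s => phi p (du u s)) r + ((n : ℝ) - 1) / r * phi p (du u r) + f r (u r) = 0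

/-- A solution of the linearized problem (31) at `u`:
`(φ_p'(u') w')' + ((n-1)/r) φ_p'(u') w' + f_u(r,u) w = 0` on `(0,1)`, `w'(0) = w(1) = 0`. -/
structure LinSol (p : ℝ) (n : ℕ) (f : ℝ → ℝ → ℝ) (u w : ℝ → ℝ) : Prop where
  reg : ContDiffOn ℝ 1 w (Set.Icc 0 1)
  reg' : ContDiffOn ℝ 1 (fun r => phi' p (du u r) * du w r) (Set.Ioc 0 1)
  ode : ∀ r ∈ Set.Ioo (0:ℝ) 1,
    deriv (fun s => phi' p (du u s) * du w s) r
      + ((n : ℝ) - 1) / r * (phi' p (du u r) * du w r) + deriv (f r) (u r) * w r = 0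
  bc0 : du w 0 = 0
  bc1 : w 1 = 0

/- ### Auxiliary lemmas -/

open Real Filter Asymptotics

lemma abs_phi (p : ℝ) (hp : 1 < p) (t : ℝ) : |phi p t| = |t| ^ (p - 1) := by
  rcases eq_or_ne t 0 with rfl | ht
  · simp [phi, Real.zero_rpow (by linarith : p - 1 ≠ 0)]
  · have h : (0:ℝ) < |t| := abs_pos.2 ht
    rw [phi, abs_mul, abs_of_nonneg (Real.rpow_nonneg (abs_nonneg t) _)]
    nth_rewrite 1 [← Real.rpow_one |t|]
    rw [← Real.rpow_add h]
    ring_nf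

lemma phi_inv (p : ℝ) (hp : 1 < p) (t : ℝ) : phi (p/(p-1)) (phi p t) = t := by
  rcases eq_or_ne t 0 with rfl | ht
  · simp [phi]
  · have h : (0:ℝ) < |t| := abs_pos.2 ht
    have hp1 : p - 1 ≠ 0 := by linarith
    rw [phi, abs_phi p hp t, ← Real.rpow_mul (abs_nonneg t)]
    have he : (p - 1) * (p / (p - 1) - 2) = 2 - p := by field_simp; ring
    rw [he, phi]
    rw [mul_assoc, ← Real.rpow_add h]
    norm_num

lemma phi_neg (p t : ℝ) : phi p (-t) = - phi p t := by
  simp [phi]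

lemma hasDerivAt_phi (q : ℝ) (y : ℝ) (hy : y ≠ 0) :
    HasDerivAt (phi q) ((q - 1) * |y| ^ (q - 2)) y := by
  have base : ∀ z : ℝ, 0 < z → HasDerivAt (phi q) ((q - 1) * |z| ^ (q - 2)) z := by
    intro z hz
    have h1 : HasDerivAt (fun x : ℝ => x ^ (q - 1)) ((q - 1) * z ^ (q - 1 - 1)) z :=
      Real.hasDerivAt_rpow_const (Or.inl hz.ne')
    have h2 : (fun x : ℝ => x ^ (q - 1)) =ᶠ[nhds z] phi q := by
      filter_upwards [eventually_gt_nhds hz] with x hx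
      rw [phi, abs_of_pos hx]
      nth_rewrite 2 [← Real.rpow_one x]
      rw [← Real.rpow_add hx]
      ring_nf
    have h3 := h1.congr_of_eventuallyEq h2.symm
    rw [abs_of_pos hz]
    refine h3.congr_deriv ?_
    rw [sub_sub, one_add_one_eq_two]
  rcases hy.lt_or_gt with hy' | hy'
  · have h1 := ((base (-y) (by linarith)).comp y (hasDerivAt_neg y)).neg
    change HasDerivAt (fun x : ℝ => -phi q (-x)) _ y at h1
    have h2 : (fun x : ℝ => -phi q (-x)) = phi q := by
      funext x; rw [phi_neg, neg_neg]
    rw [h2] at h1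
    convert h1 using 1
    rw [abs_neg]; ring
  · exact base y hy'

lemma Wr_zero (p : ℝ) (hp : 1 < p) (hp2 : p ≠ 2) (U W : ℝ → ℝ) (r g' h' : ℝ)
    (hUr : U r = 0) (hg' : g' ≠ 0)
    (hG : HasDerivAt (fun s => phi p (U s)) g' r)
    (hH : HasDerivAt (fun s => phi' p (U s) * W s) h' r)
    (habs : ∀ t : ℝ, |phi p t| = |t| ^ (p - 1))
    (hWc : ContinuousAt W r) : W r = 0 := by
  have hp1 : (0:ℝ) < p - 1 := by linarith
  set α : ℝ := (p - 2) / (p - 1) with hα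
  have hα1 : α < 1 := by rw [hα, div_lt_one hp1]; linarith
  have hHr : phi' p (U r) * W r = 0 := by
    rw [hUr, phi', abs_zero,
      Real.zero_rpow (by intro h; apply hp2; linarith [sub_eq_zero.mp h] : p - 2 ≠ 0)]
    ring
  obtain ⟨C, hC⟩ := (hH.isBigO_sub).bound
  rw [hHr] at hC
  have hGlo := (hasDerivAt_iff_isLittleO.1 hG).def (half_pos (abs_pos.2 hg'))
  have hGr : phi p (U r) = 0 := by rw [hUr, phi]; ring
  rw [hGr] at hGlo
  have hHabs : ∀ s, |phi' p (U s) * W s| = (p-1) * |phi p (U s)| ^ α * |W s| := by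
    intro s
    rw [abs_mul, phi', abs_mul, abs_of_pos hp1,
      abs_of_nonneg (Real.rpow_nonneg (abs_nonneg _) _), habs]
    have e : |U s| ^ (p-2) = (|U s| ^ (p-1)) ^ α := by
      rw [← Real.rpow_mul (abs_nonneg _)]
      congr 1
      rw [hα]
      field_simp
    rw [e]
  obtain ⟨m, hm, hGα⟩ : ∃ m : ℝ, 0 < m ∧ ∀ᶠ s in nhds r, s ≠ r →
      m * |s - r| ^ α ≤ |phi p (U s)| ^ α := by
    rcases le_or_gt 0 α with h0 | h0
    · refine ⟨(|g'|/2) ^ α, Real.rpow_pos_of_pos (half_pos (abs_pos.2 hg')) _, ?_⟩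
      filter_upwards [hGlo] with s hs hsne
      rw [← Real.mul_rpow (by positivity) (abs_nonneg _)]
      apply Real.rpow_le_rpow (by positivity) _ h0
      have := abs_sub_abs_le_abs_sub ((s - r) • g') (phi p (U s))
      simp only [smul_eq_mul, Real.norm_eq_abs, sub_zero] at hs this
      rw [abs_sub_comm] at this
      rw [abs_mul] at this
      nlinarith [abs_nonneg (s - r), abs_nonneg (phi p (U s))]
    · refine ⟨(3*|g'|/2) ^ α, Real.rpow_pos_of_pos (by positivity) _, ?_⟩
      filter_upwards [hGlo] with s hs hsne
      rw [← Real.mul_rpow (by positivity) (abs_nonneg _)]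
      have hsr : (0:ℝ) < |s - r| := abs_pos.2 (sub_ne_zero.2 hsne)
      simp only [smul_eq_mul, Real.norm_eq_abs, sub_zero] at hs
      have hGpos : 0 < |phi p (U s)| := by
        have := abs_sub_abs_le_abs_sub ((s - r) * g') (phi p (U s))
        rw [abs_sub_comm, abs_mul] at this
        nlinarith [abs_pos.2 hg']
      apply Real.rpow_le_rpow_of_nonpos hGpos _ h0.le
      have := abs_sub_abs_le_abs_sub (phi p (U s)) ((s - r) * g')
      rw [abs_mul] at this
      nlinarith
  have hsq : ∀ᶠ s in nhdsWithin r {r}ᶜ,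
      |W s| ≤ C / ((p-1) * m) * |s - r| ^ (1 - α) := by
    rw [eventually_nhdsWithin_iff]
    filter_upwards [hC, hGα] with s hC1 hG1 hsne
    simp only [Set.mem_compl_iff, Set.mem_singleton_iff] at hsne
    have hsr : (0:ℝ) < |s - r| := abs_pos.2 (sub_ne_zero.2 hsne)
    have h2 := hG1 hsne
    simp only [Real.norm_eq_abs, sub_zero] at hC1
    rw [hHabs s] at hC1
    have hαpos : (0:ℝ) < |s - r| ^ α := Real.rpow_pos_of_pos hsr _
    have key : |s - r| ^ (1 - α) * |s - r| ^ α = |s - r| := by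
      rw [← Real.rpow_add hsr]; simp
    have hD : (0:ℝ) < (p-1) * m * |s-r| ^ α := by positivity
    have heq : C / ((p-1)*m) * |s - r| ^ (1-α) * ((p-1) * m * |s-r| ^ α) = C * |s - r| := by
      have gen : ∀ X Y : ℝ, X * Y = |s - r| →
          C / ((p-1)*m) * X * ((p-1) * m * Y) = C * |s - r| := by
        intro X Y hXY
        rw [← hXY]
        field_simp
      exact gen _ _ key
    rw [← mul_le_mul_iff_of_pos_right hD, heq]
    nlinarith [mul_le_mul_of_nonneg_left h2
      (mul_nonneg (by linarith : (0:ℝ) ≤ p - 1) (abs_nonneg (W s))), abs_nonneg (W s)]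
  have htend : Filter.Tendsto (fun s => C / ((p-1)*m) * |s - r| ^ (1 - α))
      (nhdsWithin r {r}ᶜ) (nhds 0) := by
    have h1 : Filter.Tendsto (fun s : ℝ => |s - r|) (nhds r) (nhds 0) := by
      have : ContinuousAt (fun s : ℝ => |s - r|) r := by fun_prop
      simpa using this.tendsto
    have h2 : Filter.Tendsto (fun s : ℝ => |s - r| ^ (1 - α)) (nhds r) (nhds 0) := by
      have hc : ContinuousAt (fun x : ℝ => x ^ (1 - α)) 0 :=
        Real.continuousAt_rpow_const 0 (1-α) (Or.inr (by linarith))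
      have := hc.tendsto.comp h1
      simpa [Function.comp_def, Real.zero_rpow (by linarith : 1 - α ≠ 0)] using this
    have := h2.const_mul (C / ((p-1)*m))
    simp only [mul_zero] at this
    exact this.mono_left nhdsWithin_le_nhds
  have hWtend : Filter.Tendsto (fun s => |W s|) (nhdsWithin r {r}ᶜ) (nhds 0) :=
    squeeze_zero' (Filter.Eventually.of_forall (fun s => abs_nonneg _)) hsq htend
  have hWtend2 : Filter.Tendsto (fun s => |W s|) (nhdsWithin r {r}ᶜ) (nhds (|W r|)) := by
    have : ContinuousAt (fun s => |W s|) r := hWc.abs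
    exact this.tendsto.mono_left nhdsWithin_le_nhds
  have := tendsto_nhds_unique hWtend2 hWtend
  exact abs_eq_zero.1 this

lemma hasDerivAt_key (p : ℝ) (hp : 1 < p) (U W : ℝ → ℝ) (r g' h' : ℝ)
    (hG : HasDerivAt (fun s => phi p (U s)) g' r)
    (hH : HasDerivAt (fun s => phi' p (U s) * W s) h' r)
    (hWc : ContinuousAt W r) :
    HasDerivAt (fun s => (p - 1) * phi p (U s) * W s) (g' * W r + U r * h') r := by
  rcases eq_or_ne p 2 with rfl | hp2
  · have e1 : (fun s => phi (2:ℝ) (U s)) = U := by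
      funext s; rw [phi]; norm_num
    have e2 : (fun s => phi' (2:ℝ) (U s) * W s) = W := by
      funext s; rw [phi']; norm_num
    rw [e1] at hG
    rw [e2] at hH
    have e3 : (fun s => ((2:ℝ) - 1) * phi 2 (U s) * W s) = fun s => U s * W s := by
      funext s; rw [phi]; norm_num
    rw [e3]
    exact hG.mul hH
  rcases eq_or_ne (U r) 0 with hUr | hUr
  · have hGr : phi p (U r) = 0 := by rw [hUr, phi]; ring
    have hgW : g' * W r = 0 := by
      rcases eq_or_ne g' 0 with h | h
      · rw [h]; ring
      · rw [Wr_zero p hp hp2 U W r g' h' hUr h hG hH (abs_phi p hp) hWc]; ring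
    have h0 : HasDerivAt (fun s => (p - 1) * phi p (U s) * W s) 0 r := by
      rw [hasDerivAt_iff_isLittleO]
      have hfe : (fun s => (p-1) * phi p (U s) * W s - (p-1) * phi p (U r) * W r
            - (s - r) • (0:ℝ))
          = fun s => (p-1) * ((phi p (U s) - (s - r) * g') * W s)
            + ((p-1) * g') * ((s - r) * W s) := by
        funext s; rw [hGr]; simp only [smul_eq_mul]; ring
      rw [hfe]
      apply IsLittleO.add
      · have h1 : (fun s => phi p (U s) - (s - r) * g') =o[nhds r] fun s => s - r := by
          have := hasDerivAt_iff_isLittleO.1 hG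
          simpa only [hGr, sub_zero, smul_eq_mul] using this
        have hW1 : W =O[nhds r] (fun _ => (1:ℝ)) := hWc.tendsto.isBigO_one ℝ
        have := (h1.mul_isBigO hW1).const_mul_left (p-1)
        simpa using this
      · rcases mul_eq_zero.1 hgW with h | h
        · simpa [h] using (isLittleO_zero (fun s : ℝ => s - r) (nhds r) :
            (fun _ : ℝ => (0:ℝ)) =o[nhds r] fun s => s - r)
        · have hW0 : Filter.Tendsto W (nhds r) (nhds 0) := h ▸ hWc.tendsto
          have hW2 : W =o[nhds r] (fun _ => (1:ℝ)) := (isLittleO_one_iff ℝ).2 hW0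
          have := ((isBigO_refl (fun s : ℝ => s - r) (nhds r)).mul_isLittleO hW2).const_mul_left
            ((p-1) * g')
          simpa using this
    convert h0 using 1
    rw [hUr, hgW]; ring
  · have hg0 : phi p (U r) ≠ 0 := by
      have h1 : 0 < |phi p (U r)| := by
        rw [abs_phi p hp]; exact Real.rpow_pos_of_pos (abs_pos.2 hUr) _
      exact abs_pos.1 h1
    set q : ℝ := p / (p-1) with hq
    have hp1 : p - 1 ≠ 0 := by intro h; rw [sub_eq_zero] at h; linarith
    have hU' : HasDerivAt U ((q - 1) * |phi p (U r)| ^ (q - 2) * g') r := by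
      have hc := (hasDerivAt_phi q (phi p (U r)) hg0).comp r hG
      have e : (phi q ∘ fun s => phi p (U s)) = U := by
        funext s; exact phi_inv p hp (U s)
      rwa [e] at hc
    have hP := hU'.mul hH
    have e3 : (fun s => (p - 1) * phi p (U s) * W s)
        = fun s => U s * (phi' p (U s) * W s) := by
      funext s; simp only [phi, phi']; ring
    rw [e3]
    refine hP.congr_deriv ?_
    symm
    have key : (q - 1) * |phi p (U r)| ^ (q - 2) * ((p-1) * |U r| ^ (p-2)) = 1 := by
      rw [abs_phi p hp, ← Real.rpow_mul (abs_nonneg _)]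
      have he : (p - 1) * (q - 2) = 2 - p := by rw [hq]; field_simp; ring
      rw [he]
      have h2 : |U r| ^ (2-p) * |U r| ^ (p-2) = 1 := by
        rw [← Real.rpow_add (abs_pos.2 hUr)]; norm_num
      have h3 : (q - 1) * (p - 1) = 1 := by rw [hq]; field_simp; ring
      calc (q - 1) * |U r| ^ (2-p) * ((p-1) * |U r| ^ (p-2))
          = ((q-1)*(p-1)) * (|U r| ^ (2-p) * |U r| ^ (p-2)) := by ring
        _ = 1 := by rw [h2, h3, mul_one]
    rw [phi']
    have : (q - 1) * |phi p (U r)| ^ (q - 2) * g' * ((p - 1) * |U r| ^ (p - 2) * W r)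
        = ((q - 1) * |phi p (U r)| ^ (q - 2) * ((p-1) * |U r| ^ (p-2))) * (g' * W r) := by ring
    rw [this, key]
    ring

lemma hasDerivAt_pow_div (m : ℕ) (r : ℝ) (hr : r ≠ 0) :
    HasDerivAt (fun s : ℝ => s ^ m) ((m:ℝ) * r ^ m / r) r := by
  have h := hasDerivAt_pow m r
  refine h.congr_deriv ?_
  symm
  rcases m with _ | k
  · simp
  · rw [pow_succ]
    simp only [Nat.add_sub_cancel]
    field_simp

/-- Lemma 2.4: M. Tang type identities for `ξ(r)` and `T(r)`. -/
theorem stmt2 (p : ℝ) (hp : 1 < p) (n : ℕ) (hn : 1 ≤ n)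
    (f : ℝ → ℝ → ℝ)
    (hf : ContDiffOn ℝ 1 (fun z : ℝ × ℝ => f z.1 z.2) (Set.Icc 0 1 ×ˢ Set.Ici 0))
    (u : ℝ → ℝ) (hu : RadialSol p n f u)
    (w : ℝ → ℝ) (hw : LinSol p n f u w) :
    ∀ r ∈ Set.Ioo (0:ℝ) 1,
      deriv (fun s => s ^ (n - 1) *
          ((p - 1) * phi p (du u s) * w s - phi' p (du u s) * u s * du w s)) r
        = r ^ (n - 1) * w r * (u r * deriv (f r) (u r) - (p - 1) * f r (u r)) ∧
      deriv (fun s => s ^ n *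
          ((p - 1) * phi p (du u s) * du w s + f s (u s) * w s)
          + ((n : ℝ) - p) * s ^ (n - 1) * phi p (du u s) * w s) r
        = r ^ (n - 1) * w r * (p * f r (u r) + r * deriv (fun s => f s (u r)) r) := by
  obtain ⟨m, rfl⟩ : ∃ m, n = m + 1 := ⟨n - 1, (Nat.succ_pred_eq_of_pos hn).symm⟩
  intro r hr
  have hr0 : (0:ℝ) < r := hr.1
  have hr1 : r < 1 := hr.2
  have hrne : r ≠ 0 := ne_of_gt hr0
  have hIcc : Set.Icc (0:ℝ) 1 ∈ nhds r := Icc_mem_nhds hr0 hr1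
  have hIoc : Set.Ioc (0:ℝ) 1 ∈ nhds r := Ioc_mem_nhds hr0 hr1
  -- derivatives of u and w
  have hud : HasDerivAt u (du u r) r := by
    have hd : DifferentiableAt ℝ u r := (hu.reg.contDiffAt hIcc).differentiableAt one_ne_zero
    have : du u r = deriv u r := derivWithin_of_mem_nhds hIcc
    rw [this]; exact hd.hasDerivAt
  have hwd : HasDerivAt w (du w r) r := by
    have hd : DifferentiableAt ℝ w r := (hw.reg.contDiffAt hIcc).differentiableAt one_ne_zero
    have : du w r = deriv w r := derivWithin_of_mem_nhds hIcc
    rw [this]; exact hd.hasDerivAt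
  have hWc : ContinuousAt (du w) r := by
    have hc : ContinuousOn (du w) (Set.Icc 0 1) :=
      hw.reg.continuousOn_derivWithin (uniqueDiffOn_Icc zero_lt_one) le_rfl
    exact hc.continuousAt hIcc
  -- derivatives of G and H
  have hG : HasDerivAt (fun s => phi p (du u s)) (deriv (fun s => phi p (du u s)) r) r :=
    ((hu.reg'.contDiffAt hIoc).differentiableAt one_ne_zero).hasDerivAt
  have hH : HasDerivAt (fun s => phi' p (du u s) * du w s)
      (deriv (fun s => phi' p (du u s) * du w s) r) r :=
    ((hw.reg'.contDiffAt hIoc).differentiableAt one_ne_zero).hasDerivAt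
  set g' := deriv (fun s => phi p (du u s)) r with hg'def
  set h' := deriv (fun s => phi' p (du u s) * du w s) r with hh'def
  -- the f derivative
  have hur : 0 < u r := hu.pos r ⟨le_of_lt hr0, hr1⟩
  have hmem : (Set.Icc (0:ℝ) 1 ×ˢ Set.Ici (0:ℝ)) ∈ nhds (r, u r) :=
    Filter.mem_of_superset (prod_mem_nhds hIcc (Ici_mem_nhds hur)) Set.Subset.rfl
  have hfdiff : DifferentiableAt ℝ (fun z : ℝ × ℝ => f z.1 z.2) (r, u r) :=
    (hf.contDiffAt hmem).differentiableAt one_ne_zero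
  set L := fderiv ℝ (fun z : ℝ × ℝ => f z.1 z.2) (r, u r) with hL
  have hA : HasDerivAt (fun s => f s (u r)) (L (1, 0)) r := by
    have hin : HasDerivAt (fun s : ℝ => (s, u r)) ((1:ℝ), (0:ℝ)) r :=
      HasDerivAt.prodMk (hasDerivAt_id r) (hasDerivAt_const r (u r))
    exact hfdiff.hasFDerivAt.comp_hasDerivAt r hin
  have hB : HasDerivAt (f r) (L (0, 1)) (u r) := by
    have hin : HasDerivAt (fun y : ℝ => (r, y)) ((0:ℝ), (1:ℝ)) (u r) :=
      HasDerivAt.prodMk (hasDerivAt_const (u r) r) (hasDerivAt_id (u r))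
    exact hfdiff.hasFDerivAt.comp_hasDerivAt (u r) hin
  have hfd : HasDerivAt (fun s => f s (u s))
      (deriv (fun s => f s (u r)) r + deriv (f r) (u r) * du u r) r := by
    have hin : HasDerivAt (fun s : ℝ => (s, u s)) ((1:ℝ), du u r) r :=
      HasDerivAt.prodMk (hasDerivAt_id r) hud
    have hfull := hfdiff.hasFDerivAt.comp_hasDerivAt r hin
    rw [hA.deriv, hB.deriv]
    have hlin : L (1, du u r) = L (1, 0) + L (0, 1) * du u r := by
      have h1 : ((1:ℝ), du u r) = (1, 0) + (du u r) • ((0:ℝ), (1:ℝ)) := by simp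
      rw [h1, map_add, map_smul]
      simp [smul_eq_mul]; ring
    rw [← hlin]; exact hfull
  -- ODE values
  have hODEu := hu.ode r hr
  have hODEw := hw.ode r hr
  rw [← hg'def] at hODEu
  rw [← hh'def] at hODEw
  push_cast at hODEu hODEw
  -- trick identity
  have hid : (p - 1) * phi p (du u r) * du w r = du u r * (phi' p (du u r) * du w r) := by
    simp only [phi, phi']; ring
  -- key hard derivative
  have hkey : HasDerivAt (fun s => (p - 1) * phi p (du u s) * du w s)
      (g' * du w r + du u r * h') r :=
    hasDerivAt_key p hp (du u) (du w) r g' h' hG hH hWc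
  -- power derivatives
  have hpowm : HasDerivAt (fun s : ℝ => s ^ m) ((m:ℝ) * r ^ m / r) r :=
    hasDerivAt_pow_div m r hrne
  have hpowm1 : HasDerivAt (fun s : ℝ => s ^ (m+1)) (((m:ℝ)+1) * r ^ (m+1) / r) r := by
    have := hasDerivAt_pow_div (m+1) r hrne
    push_cast at this
    exact this
  simp only [Nat.add_sub_cancel]
  constructor
  · -- ξ identity
    have h1 : HasDerivAt (fun s => (p - 1) * phi p (du u s) * w s)
        ((p-1) * g' * w r + (p - 1) * phi p (du u r) * du w r) r := by
      exact (hG.const_mul (p-1)).mul hwd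
    have h2 : HasDerivAt (fun s => (phi' p (du u s) * du w s) * u s)
        (h' * u r + (phi' p (du u r) * du w r) * du u r) r := hH.mul hud
    have efun : (fun s => s ^ m *
          ((p - 1) * phi p (du u s) * w s - phi' p (du u s) * u s * du w s))
        = fun s => s ^ m * ((p - 1) * phi p (du u s) * w s
            - (phi' p (du u s) * du w s) * u s) := by
      funext s; ring_nf
    rw [efun]
    refine (hpowm.mul (h1.sub h2)).deriv.trans ?_
    simp only [Pi.sub_apply, Pi.add_apply, Pi.mul_apply]
    linear_combination (norm := (field_simp; ring))
      (r^m * (p-1) * w r) * hODEu - (r^m * u r) * hODEw + (r^m) * hid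
  · -- T identity
    have hfw : HasDerivAt (fun s => f s (u s) * w s)
        ((deriv (fun s => f s (u r)) r + deriv (f r) (u r) * du u r) * w r
          + f r (u r) * du w r) r := hfd.mul hwd
    have hsum := hkey.add hfw
    have hsec := ((hpowm.const_mul (((m:ℝ)+1) - p)).mul hG).mul hwd
    have efun : (fun s => s ^ (m+1) *
          ((p - 1) * phi p (du u s) * du w s + f s (u s) * w s)
          + ((↑(m+1) : ℝ) - p) * s ^ m * phi p (du u s) * w s)
        = fun s => s ^ (m+1) *
          ((p - 1) * phi p (du u s) * du w s + f s (u s) * w s)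
          + (((m:ℝ)+1) - p) * s ^ m * phi p (du u s) * w s := by
      push_cast; rfl
    rw [efun]
    refine ((hpowm1.mul hsum).add hsec).deriv.trans ?_
    simp only [Pi.sub_apply, Pi.add_apply, Pi.mul_apply]
    push_cast
    linear_combination (norm := (field_simp; ring))
      (r^(m+1) * du w r + (((m:ℝ)+1) - p) * r^m * w r) * hODEu
      + (r^(m+1) * du u r) * hODEw + ((m:ℝ) * r^m) * hid
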